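/- Let ū_h ∈ U with ‖ū_h‖_{X*} ≤ 1/α, ȳ_h ∈ Y, and w̄_h ∈ W be arbitrary; set ρ_y := Aȳ_h − Bū_h ∈ W*. Let ζ_h be a subgradient of the norm ‖·‖_X at B*w̄_h and ζ̂ a subgradient of ‖·‖_X at B*ŵ; set ρ_u := αū_h − ζ_h ∈ U and D := (ζ̂ − ζ_h)(B*(ŵ − w̄_h)). Then ‖Cȳ_h − Cȳ‖_G² ≤ (4/α)(−ρ_u)(B*ŵ) + (4/α)D + 4‖C(A⁻¹ρ_y)‖_G². -/

import Mathlib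

open RealInnerProductSpace NormedSpace

set_option maxHeartbeats 1000000

/-- A subgradient of the norm at `x` attains the norm at `x`. -/
lemma subgrad_val {X : Type*} [NormedAddCommGroup X] [NormedSpace ℝ X]
    (ζ : StrongDual ℝ X) (x : X) (h : ∀ z : X, ζ z - ζ x ≤ ‖z‖ - ‖x‖) : ζ x = ‖x‖ := by
  have h1 := h 0
  have h2 := h ((2 : ℝ) • x)
  rw [map_zero] at h1
  rw [map_smul] at h2
  rw [norm_smul] at h2
  simp only [norm_zero, smul_eq_mul, Real.norm_ofNat] at h1 h2
  linarith

/-- A posteriori error estimate for Ivanov regularization in terms of the residual of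
the subgradient relation and a symmetric Bregman distance. -/
theorem stmt_9
    {X G Y W : Type*}
    [NormedAddCommGroup X] [NormedSpace ℝ X] [CompleteSpace X]
    [NormedAddCommGroup G] [InnerProductSpace ℝ G] [CompleteSpace G]
    [NormedAddCommGroup Y] [NormedSpace ℝ Y] [CompleteSpace Y]
    [NormedAddCommGroup W] [NormedSpace ℝ W] [CompleteSpace W]
    (A : Y ≃L[ℝ] StrongDual ℝ W) (Astar : W ≃L[ℝ] StrongDual ℝ Y)
    (hAadj : ∀ (y : Y) (w : W), A y w = Astar w y)
    (Bstar : W →L[ℝ] X) (B : StrongDual ℝ X →L[ℝ] StrongDual ℝ W)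
    (hB : ∀ (u : StrongDual ℝ X) (w : W), B u w = u (Bstar w))
    (C : Y →L[ℝ] G) (Cstar : G →L[ℝ] StrongDual ℝ Y)
    (hCadj : ∀ (y : Y) (g : G), ⟪C y, g⟫ = Cstar g y)
    (gδ : G) (α : ℝ) (hα : 0 < α)
    (ubar : StrongDual ℝ X) (ybar : Y)
    (hubar : ‖ubar‖ ≤ 1/α) (hybar : ybar = A.symm (B ubar))
    (hmin : ∀ u : StrongDual ℝ X, ‖u‖ ≤ 1/α →
      (1/2) * ‖C ybar - gδ‖^2 ≤ (1/2) * ‖C (A.symm (B u)) - gδ‖^2)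
    (yh : Y) (what : W)
    (hwhat : what = Astar.symm (-(Cstar (C yh - gδ))))
    (uh : StrongDual ℝ X) (huh : ‖uh‖ ≤ 1/α) (wh : W)
    (ζh ζhat : StrongDual ℝ X)
    (hζh : ∀ x : X, ζh x - ζh (Bstar wh) ≤ ‖x‖ - ‖Bstar wh‖)
    (hζhat : ∀ x : X, ζhat x - ζhat (Bstar what) ≤ ‖x‖ - ‖Bstar what‖) :
    ‖C yh - C ybar‖^2 ≤
      (4/α) * ((-(α • uh - ζh)) (Bstar what))
      + (4/α) * ((ζhat - ζh) (Bstar (what - wh)))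
      + 4 * ‖C (A.symm (A yh - B uh))‖^2 := by
  set xh : X := Bstar wh with hxh
  set xH : X := Bstar what with hxH
  -- subgradient facts
  have e1 : ζhat xH = ‖xH‖ := subgrad_val ζhat xH hζhat
  have e2 : ζh xh = ‖xh‖ := subgrad_val ζh xh hζh
  have e3 : ζhat xh ≤ ‖xh‖ := by
    have := hζhat xh; linarith
  -- bounds from the norm constraint
  have e4 : α * ubar xH ≤ ‖xH‖ := by
    have h1 : ubar xH ≤ ‖ubar‖ * ‖xH‖ :=
      le_trans (le_abs_self _) (ubar.le_opNorm xH)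
    have h2 : ‖ubar‖ * ‖xH‖ ≤ (1/α) * ‖xH‖ :=
      mul_le_mul_of_nonneg_right hubar (norm_nonneg _)
    have h3 : α * ((1/α) * ‖xH‖) = ‖xH‖ := by field_simp
    nlinarith
  have e5 : α * uh xH ≤ ‖xH‖ := by
    have h1 : uh xH ≤ ‖uh‖ * ‖xH‖ :=
      le_trans (le_abs_self _) (uh.le_opNorm xH)
    have h2 : ‖uh‖ * ‖xH‖ ≤ (1/α) * ‖xH‖ :=
      mul_le_mul_of_nonneg_right huh (norm_nonneg _)
    have h3 : α * ((1/α) * ‖xH‖) = ‖xH‖ := by field_simp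
    nlinarith
  -- abbreviations for the residual and data terms
  set ρ : StrongDual ℝ W := A yh - B uh with hρ
  set a : G := C yh - gδ with ha
  set b : G := C ybar - gδ with hb
  set d : G := C (A.symm ρ) with hd
  have hAw : Astar what = -(Cstar a) := by
    rw [hwhat, Astar.apply_symm_apply]
  have hCs : ∀ y : Y, ⟪a, C y⟫ = -(A y what) := by
    intro y
    rw [real_inner_comm, hCadj, hAadj]
    rw [hAw]
    simp
  -- ⟪a, d⟫ = -(ρ what)
  have h2 : ⟪a, d⟫ = -(ρ what) := by
    rw [hd, hCs, A.apply_symm_apply]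
  -- ⟪a, a - b⟫ = -(ρ what) + (ubar xH - uh xH)
  have hab : a - b = C (yh - ybar) := by
    rw [ha, hb, map_sub]; abel
  have hAyb : A ybar = B ubar := by rw [hybar, A.apply_symm_apply]
  have h3 : ⟪a, a - b⟫ = -(ρ what) + (ubar xH - uh xH) := by
    rw [hab, hCs]
    rw [map_sub, hAyb]
    have : (A yh - B ubar) = ρ + (B uh - B ubar) := by rw [hρ]; abel
    rw [this]
    simp only [ContinuousLinearMap.add_apply, ContinuousLinearMap.sub_apply]
    rw [hB, hB]
    ring
  -- minimality at uh
  have hsymm : A.symm (B uh) = yh - A.symm ρ := by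
    have : A.symm ρ = yh - A.symm (B uh) := by
      rw [hρ, map_sub, A.symm_apply_apply]
    rw [this]; abel
  have h4 : ‖b‖^2 ≤ ‖a - d‖^2 := by
    have := hmin uh huh
    rw [hsymm] at this
    have hrw : C (yh - A.symm ρ) - gδ = a - d := by
      rw [map_sub, ha, hd]; abel
    rw [hrw] at this
    linarith
  -- norm expansions
  have hn1 : ‖a - b‖^2 = ‖a‖^2 - 2 * ⟪a, b⟫ + ‖b‖^2 := norm_sub_sq_real a b
  have hn2 : ‖a - d‖^2 = ‖a‖^2 - 2 * ⟪a, d⟫ + ‖d‖^2 := norm_sub_sq_real a d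
  have hn3 : ⟪a, a - b⟫ = ‖a‖^2 - ⟪a, b⟫ := by
    rw [inner_sub_right, real_inner_self_eq_norm_sq]
  -- key estimate
  have key : ‖a - b‖^2 ≤ ‖d‖^2 + 2 * (ubar xH - uh xH) := by
    linarith
  -- rewrite the goal
  have hg0 : C yh - C ybar = a - b := by rw [ha, hb]; abel
  have hg1 : (-(α • uh - ζh)) xH = ζh xH - α * uh xH := by
    simp [ContinuousLinearMap.neg_apply, ContinuousLinearMap.sub_apply,
      ContinuousLinearMap.smul_apply, smul_eq_mul]
  have hg2 : (ζhat - ζh) (Bstar (what - wh)) = (ζhat xH - ζhat xh) - (ζh xH - ζh xh) := by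
    simp only [map_sub, ContinuousLinearMap.sub_apply, hxH, hxh]
    ring
  rw [hg0, hg1, hg2]
  set t1 : ℝ := ζh xH - α * uh xH with ht1
  set t2 : ℝ := (ζhat xH - ζhat xh) - (ζh xH - ζh xh) with ht2
  have hS : α * (ubar xH - uh xH) ≤ t1 + t2 := by
    rw [ht1, ht2]; linarith
  have hT : 0 ≤ t1 + t2 := by
    rw [ht1, ht2]; linarith
  have h2S : 2 * (ubar xH - uh xH) ≤ (4/α) * (t1 + t2) := by
    rw [div_mul_eq_mul_div, le_div_iff₀ hα]
    nlinarith [mul_le_mul_of_nonneg_left hS (by norm_num : (0:ℝ) ≤ 2)]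
  have hdnn : 0 ≤ ‖d‖^2 := sq_nonneg _
  have hdist : (4/α) * (t1 + t2) = (4/α) * t1 + (4/α) * t2 := by ring
  linarith
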